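/- Let Φ(1) be the r×r matrix over F = ℚ[x]/(x^N+1) of the canonical form Φ(1)(i,j) = x^{u_i} δ_{i−1 mod r, j} with x^{u_0+⋯+u_{r−1}} of order 2N, and write Φ(c) = Φ(1)^c. Then for any k ∈ ℤ, the Nr vectors { Φ(k+i) e_0 : i ∈ [Nr] } ⊆ F^r are linearly independent over ℚ. -/

import Mathlib

open Polynomial
open scoped Matrix
open Fin.NatCast

/-- The base ring `F = ℚ[x]/(x^N + 1)`. -/
noncomputable abbrev Fq (N : ℕ) : Type :=
  Polynomial ℚ ⧸ Ideal.span ({X ^ N + 1} : Set (Polynomial ℚ))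

/-- The class of `x` in `F`. -/
noncomputable def xq (N : ℕ) : Fq N :=
  Ideal.Quotient.mk (Ideal.span ({X ^ N + 1} : Set (Polynomial ℚ))) X

/-- Auxiliary exponent sequence: `tExp u n = ∑_{j=1}^{n} u (j mod r)`. -/
def tExp {r : ℕ} [NeZero r] (u : Fin r → ℕ) : ℕ → ℕ
  | 0 => 0
  | n + 1 => u (↑(n + 1)) + tExp u n

lemma tExp_succ {r : ℕ} [NeZero r] (u : Fin r → ℕ) (n : ℕ) :
    tExp u (n + 1) = u (↑(n + 1)) + tExp u n := rfl

lemma tExp_eq_sum {r : ℕ} [NeZero r] (u : Fin r → ℕ) (n : ℕ) :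
    tExp u n = ∑ j ∈ Finset.range n, u (↑(j + 1)) := by
  induction n with
  | zero => rfl
  | succ n ih => rw [tExp_succ, ih, Finset.sum_range_succ, add_comm]

lemma tExp_r {r : ℕ} [NeZero r] (u : Fin r → ℕ) :
    tExp u r = ∑ i, u i := by
  rw [tExp_eq_sum, ← Fin.sum_univ_eq_sum_range (fun j => u (↑(j + 1))) r]
  have h : ∀ i : Fin r, u (↑((i : ℕ) + 1)) = u (i + 1) := by
    intro i
    congr 1
    push_cast
    simp [Fin.cast_val_eq_self]
  simp_rw [h]
  exact Fintype.sum_equiv (Equiv.addRight (1 : Fin r)) _ _ (fun i => rfl)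

lemma tExp_add_r {r : ℕ} [NeZero r] (u : Fin r → ℕ) (n : ℕ) :
    tExp u (n + r) = tExp u n + ∑ i, u i := by
  induction n with
  | zero => simpa [tExp] using tExp_r u
  | succ n ih =>
    have hre : n + 1 + r = (n + r) + 1 := by omega
    rw [hre, tExp_succ, ih, tExp_succ]
    have : ((n + r + 1 : ℕ) : Fin r) = ((n + 1 : ℕ) : Fin r) := by
      push_cast
      simp
    rw [this]
    omega

lemma tExp_add_mul {r : ℕ} [NeZero r] (u : Fin r → ℕ) (n d : ℕ) :
    tExp u (n + d * r) = tExp u n + d * ∑ i, u i := by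
  induction d with
  | zero => simp
  | succ d ih =>
    have : n + (d + 1) * r = (n + d * r) + r := by ring
    rw [this, tExp_add_r, ih]
    ring

lemma li_congr {ι M : Type*} [AddCommMonoid M] [Module ℚ M] {v w : ι → M}
    (h : v = w) (hw : LinearIndependent ℚ w) : LinearIndependent ℚ v := h ▸ hw

set_option maxHeartbeats 1600000 in
/-- Lemma 6: for the canonical generator `Φ(1)` (an invertible matrix) with
`x^{u_0+⋯+u_{r−1}}` of order `2N`, and any `k ∈ ℤ`, the `Nr` vectors
`Φ(k+i) e_0`, `i ∈ [Nr]`, are linearly independent over `ℚ`. -/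
theorem stmt_15 (N r : ℕ) (hN : 0 < N) [NeZero r] (u : Fin r → ℕ)
    (A : Matrix (Fin r) (Fin r) (Fq N))
    (hA : ∀ i j, A i j = if j = i - 1 then xq N ^ u i else 0)
    (horder : orderOf (xq N ^ (∑ i, u i)) = 2 * N)
    (hAu : IsUnit A) (k : ℤ) :
    LinearIndependent ℚ fun i : Fin (N * r) =>
      ((hAu.unit ^ (k + (i : ℤ))) : (Matrix (Fin r) (Fin r) (Fq N))ˣ).val *ᵥ
        (Pi.single 0 1 : Fin r → Fq N) := by
  classical
  set x := xq N with hxdef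
  set S := ∑ i, u i with hSdef
  -- basic facts about x
  have hxN : x ^ N = -1 := by
    have h0 : (Ideal.Quotient.mk (Ideal.span ({X ^ N + 1} : Set (Polynomial ℚ)))
        (X ^ N + 1) : Fq N) = 0 :=
      Ideal.Quotient.eq_zero_iff_mem.mpr (Ideal.subset_span rfl)
    rw [map_add, map_pow, map_one] at h0
    exact eq_neg_of_add_eq_zero_left h0
  have hx2N : x ^ (2 * N) = 1 := by
    rw [mul_comm, pow_mul, hxN]
    norm_num
  have hfin : IsOfFinOrder x :=
    isOfFinOrder_iff_pow_eq_one.mpr ⟨2 * N, by positivity, hx2N⟩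
  have hordx : orderOf x = 2 * N := by
    refine Nat.dvd_antisymm (orderOf_dvd_of_pow_eq_one hx2N) ?_
    rw [← horder]
    exact orderOf_pow_dvd S
  have hgcd : Nat.gcd (2 * N) S = 1 := by
    have h := hfin.orderOf_pow (n := S)
    rw [horder, hordx] at h
    rcases (Nat.div_eq_self.mp h.symm) with h' | h'
    · omega
    · exact h'
  have hcop : Nat.Coprime N S :=
    Nat.Coprime.coprime_dvd_left (dvd_mul_left N 2) hgcd
  -- the step lemma for mulVec
  have hstep : ∀ (m : Fin r) (c : Fq N),
      A *ᵥ Pi.single m c = Pi.single (m + 1) (x ^ u (m + 1) * c) := by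
    intro m c
    rw [Matrix.mulVec_single]
    funext i
    rw [Pi.smul_apply, op_smul_eq_mul, Matrix.col_apply]
    rw [hA i m, Pi.single_apply]
    by_cases h : i = m + 1
    · subst h
      simp
    · rw [if_neg h, if_neg, zero_mul]
      intro hc
      exact h ((eq_sub_iff_add_eq.mp hc).symm)
  -- powers applied to e0
  set e0 : Fin r → Fq N := (Pi.single 0 1 : Fin r → Fq N) with he0
  have hpow : ∀ n : ℕ, (A ^ n) *ᵥ e0 = Pi.single ((n : Fin r)) (x ^ tExp u n) := by
    intro n
    induction n with
    | zero => rw [pow_zero, Matrix.one_mulVec]; simp [he0, tExp]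
    | succ n ih =>
      rw [pow_succ', ← Matrix.mulVec_mulVec, ih, hstep, tExp_succ, pow_add]
      have hcast : ((n : ℕ) : Fin r) + 1 = ((n + 1 : ℕ) : Fin r) := by push_cast; ring
      rw [hcast]
  -- reduce to natural powers via the linear map given by hAu.unit ^ k
  set U := hAu.unit with hU
  have hUval : (U : Matrix (Fin r) (Fin r) (Fq N)) = A := hAu.unit_spec
  have hleft : ∀ y : Fin r → Fq N,
      ((U ^ (-k) : _ˣ) : Matrix (Fin r) (Fin r) (Fq N)) *ᵥ
        (((U ^ k : _ˣ) : Matrix (Fin r) (Fin r) (Fq N)) *ᵥ y) = y := by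
    intro y
    rw [Matrix.mulVec_mulVec, ← Units.val_mul, ← zpow_add]
    simp
  set f : (Fin r → Fq N) →ₗ[ℚ] (Fin r → Fq N) :=
    (((U ^ k : _ˣ) : Matrix (Fin r) (Fin r) (Fq N)).mulVecLin).restrictScalars ℚ with hf
  have hfinj : LinearMap.ker f = ⊥ := by
    apply LinearMap.ker_eq_bot_of_injective
    intro a b hab
    simp only [hf, LinearMap.coe_restrictScalars, Matrix.mulVecLin_apply] at hab
    have ha := hleft a
    have hb := hleft b
    rw [hab] at ha
    exact ha.symm.trans hb
  -- the basis of Fq N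
  have hmono : (X ^ N + 1 : Polynomial ℚ).Monic := by
    have := Polynomial.monic_X_pow_add_C (1 : ℚ) hN.ne'
    simpa using this
  set pb := AdjoinRoot.powerBasis' hmono with hpb
  have hdim : pb.dim = N := by
    simp only [hpb, AdjoinRoot.powerBasis'_dim]
    have : (X ^ N + 1 : Polynomial ℚ) = X ^ N + C 1 := by simp
    rw [this, Polynomial.natDegree_X_pow_add_C]
  set eqv : AdjoinRoot (X ^ N + 1 : Polynomial ℚ) ≃ₗ[ℚ] Fq N :=
    (LinearEquiv.refl ℚ (Fq N) : AdjoinRoot (X ^ N + 1 : Polynomial ℚ) ≃ₗ[ℚ] Fq N) with heqv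
  set B : Module.Basis (Fin N) ℚ (Fq N) := (pb.basis.reindex (finCongr hdim)).map eqv with hB
  have hBval : ∀ j : Fin N, B j = x ^ (j : ℕ) := by
    intro j
    rw [hB]
    rw [Module.Basis.map_apply, Module.Basis.reindex_apply]
    rw [pb.basis_eq_pow]
    rfl
  set PB : Module.Basis ((_ : Fin r) × Fin N) ℚ (Fin r → Fq N) := Pi.basis (fun _ => B) with hPB
  -- the reindexing map
  set σ : Fin (N * r) → (_ : Fin r) × Fin N :=
    fun i => ⟨((i : ℕ) : Fin r), ⟨tExp u (i : ℕ) % N, Nat.mod_lt _ hN⟩⟩ with hσ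
  -- key arithmetic injectivity
  have key : ∀ a b : ℕ, a ≤ b → b < N * r → a % r = b % r →
      tExp u a % N = tExp u b % N → a = b := by
    intro a b hab hbN hmod ht
    obtain ⟨c, hc⟩ := (Nat.modEq_iff_dvd' hab).mp hmod
    have hb : b = a + c * r := by rw [mul_comm]; omega
    rw [hb, tExp_add_mul] at ht
    have hdvd : N ∣ c * S := by
      have := (Nat.modEq_iff_dvd' (Nat.le_add_right _ _)).mp ht
      simpa using this
    have hdc : N ∣ c := hcop.dvd_of_dvd_mul_right hdvd
    have hcr : c * r < N * r := by omega
    have hcN : c < N := Nat.lt_of_mul_lt_mul_right hcr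
    have hc0 : c = 0 := Nat.eq_zero_of_dvd_of_lt hdc hcN
    subst hc0
    simpa using hb.symm
  have hσinj : Function.Injective σ := by
    intro i i' h
    simp only [hσ, Sigma.mk.inj_iff, Fin.mk.injEq, heq_eq_eq] at h
    obtain ⟨h1, h2⟩ := h
    have hm : (i : ℕ) % r = (i' : ℕ) % r := by
      have := congrArg (Fin.val) h1
      simpa [Fin.val_natCast] using this
    have : (i : ℕ) = (i' : ℕ) := by
      rcases le_total (i : ℕ) (i' : ℕ) with hle | hle
      · exact key _ _ hle i'.isLt hm h2
      · exact (key _ _ hle i.isLt hm.symm h2.symm).symm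
    exact Fin.val_injective this
  -- the sign decomposition
  have hsm : ∀ (e : ℕ) (z : Fq N), ((-1 : ℚ) ^ e) • z = (-1 : Fq N) ^ e * z := by
    intro e z
    induction e generalizing z with
    | zero => simp
    | succ n ih =>
      rw [pow_succ, pow_succ, mul_smul, neg_smul, one_smul, ih]
      ring
  have hsign : ∀ t : ℕ, x ^ t = ((-1 : ℚ) ^ (t / N)) • x ^ (t % N) := by
    intro t
    rw [hsm, ← hxN, ← pow_mul, ← pow_add, Nat.div_add_mod]
  -- assemble the independent family
  have hPBind := ((PB.linearIndependent.comp σ hσinj).units_smul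
    (fun i => (-1 : ℚˣ) ^ (tExp u (i : ℕ) / N)))
  have hwfam : (fun i : Fin (N * r) =>
      ((-1 : ℚˣ) ^ (tExp u (i : ℕ) / N) • (PB ∘ σ) i)) =
      fun i : Fin (N * r) => (A ^ (i : ℕ)) *ᵥ e0 := by
    funext i
    rw [hpow]
    simp only [Function.comp_apply, hPB, Pi.basis_apply, hσ]
    rw [hBval]
    rw [Units.smul_def, Units.val_pow_eq_pow_val, Units.coe_neg_one, ← Pi.single_smul]
    rw [hsign (tExp u (i : ℕ))]
  have hwind : LinearIndependent ℚ (fun i : Fin (N * r) => (A ^ (i : ℕ)) *ᵥ e0) := by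
    rw [← hwfam]
    exact hPBind
  -- transport through f
  have hfam2 : (fun i : Fin (N * r) =>
      ((hAu.unit ^ (k + (i : ℤ))) : (Matrix (Fin r) (Fin r) (Fq N))ˣ).val *ᵥ e0) =
      f ∘ (fun i : Fin (N * r) => (A ^ (i : ℕ)) *ᵥ e0) := by
    funext i
    simp only [Function.comp_apply, hf, LinearMap.coe_restrictScalars,
      Matrix.mulVecLin_apply, Matrix.mulVec_mulVec]
    rw [zpow_add, Units.val_mul, zpow_natCast, Units.val_pow_eq_pow_val, hAu.unit_spec]
  exact li_congr hfam2 (hwind.map' f hfinj)
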